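/- Let $X$ be a random variable uniformly distributed on $\{+1,-1\}$, $Z\sim\mathcal{N}(0,1)$ independent of $X$, and let $\tau > 0$. Then $\frac{(\mathbb{E}[\tanh(\tau X + \sqrt{\tau} Z) \cdot X])^2}{\mathbb{E}[\tanh^2(\tau X + \sqrt{\tau} Z)]} \ge \frac{(\mathbb{E}[(\tau X + \sqrt{\tau} Z)X])^2}{\mathbb{E}[(\tau X + \sqrt{\tau} Z)^2]} = \frac{\tau}{\tau + 1}$. -/

import Mathlib

open MeasureTheory ProbabilityTheory Real Filter
open scoped ENNReal NNReal

noncomputable def q (x : ℝ) : ℝ := gaussianPDFReal 0 1 x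

lemma q_eq (x : ℝ) : q x = (Real.sqrt (2 * π))⁻¹ * rexp (-x ^ 2 / 2) := by
  simp [q, gaussianPDFReal]

lemma integral_gauss (f : ℝ → ℝ) :
    ∫ x, f x ∂(gaussianReal 0 1) = ∫ x, q x * f x := by
  rw [gaussianReal_of_var_ne_zero 0 one_ne_zero]
  have h : (gaussianPDF 0 1) = fun x => ((Real.toNNReal (q x) : ℝ≥0) : ℝ≥0∞) := by
    funext x; rfl
  rw [h, integral_withDensity_eq_integral_smul
    (f := fun x => Real.toNNReal (q x))
    (measurable_real_toNNReal.comp (measurable_gaussianPDFReal 0 1))]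
  congr 1; funext x
  rw [NNReal.smul_def, smul_eq_mul]
  congr 1
  exact Real.coe_toNNReal _ (gaussianPDFReal_nonneg 0 1 x)

lemma q_nonneg (x : ℝ) : 0 ≤ q x := gaussianPDFReal_nonneg 0 1 x

lemma q_meas : Measurable q := measurable_gaussianPDFReal 0 1

lemma exp_arg (x : ℝ) : -x ^ 2 / 2 = -(1/2 * x ^ 2) := by ring

lemma int_x_exp : Integrable (fun x : ℝ => x * rexp (-x ^ 2 / 2)) := by
  have := integrable_mul_exp_neg_mul_sq (b := 1/2) (by norm_num)
  exact this.congr (Filter.Eventually.of_forall fun x => by ring_nf)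

lemma int_x2_exp : Integrable (fun x : ℝ => x ^ 2 * rexp (-x ^ 2 / 2)) := by
  have := integrable_rpow_mul_exp_neg_mul_sq (b := 1/2) (by norm_num) (s := 2) (by norm_num)
  refine this.congr (Filter.Eventually.of_forall fun x => ?_)
  have : x ^ (2:ℝ) = x ^ (2:ℕ) := by
    rw [show ((2:ℝ) = ((2:ℕ):ℝ)) by norm_num, Real.rpow_natCast]
  simp only [this]
  ring_nf

lemma int_exp : Integrable (fun x : ℝ => rexp (-x ^ 2 / 2)) := by
  have := integrable_exp_neg_mul_sq (b := 1/2) (by norm_num)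
  exact this.congr (Filter.Eventually.of_forall fun x => by ring_nf)

lemma integrable_gauss_iff (f : ℝ → ℝ) :
    Integrable f (gaussianReal 0 1) ↔ Integrable (fun x => q x * f x) volume := by
  rw [gaussianReal_of_var_ne_zero 0 one_ne_zero]
  have h : (gaussianPDF 0 1) = fun x => ((Real.toNNReal (q x) : ℝ≥0) : ℝ≥0∞) := rfl
  rw [h, integrable_withDensity_iff_integrable_smul
    (f := fun x => Real.toNNReal (q x))
    (measurable_real_toNNReal.comp (measurable_gaussianPDFReal 0 1))]
  constructor <;> refine fun h' => h'.congr (Filter.Eventually.of_forall fun x => ?_) <;>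
    simp [NNReal.smul_def, Real.coe_toNNReal _ (q_nonneg x), mul_comm]

lemma mi1 : Integrable (fun x : ℝ => x) (gaussianReal 0 1) := by
  rw [integrable_gauss_iff]
  refine (int_x_exp.const_mul ((Real.sqrt (2 * π))⁻¹)).congr
    (Filter.Eventually.of_forall fun x => ?_)
  simp only [q_eq]; ring

lemma mi2 : Integrable (fun x : ℝ => x ^ 2) (gaussianReal 0 1) := by
  rw [integrable_gauss_iff]
  refine (int_x2_exp.const_mul ((Real.sqrt (2 * π))⁻¹)).congr
    (Filter.Eventually.of_forall fun x => ?_)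
  simp only [q_eq]; ring

lemma m1 : ∫ x, x ∂(gaussianReal 0 1) = 0 := by
  rw [integral_gauss]
  have h1 : ∫ x : ℝ, q (-x) * (-x) = ∫ x : ℝ, q x * x :=
    integral_neg_eq_self (fun x : ℝ => q x * x) volume
  have h2 : (fun x : ℝ => q (-x) * (-x)) = fun x : ℝ => -(q x * x) := by
    funext x; simp only [q_eq]; ring_nf
  rw [h2, integral_neg] at h1
  linarith

lemma hasDeriv_F (x : ℝ) :
    HasDerivAt (fun x : ℝ => -x * rexp (-x ^ 2 / 2)) ((x ^ 2 - 1) * rexp (-x ^ 2 / 2)) x := by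
  have h1 : HasDerivAt (fun x : ℝ => -x ^ 2 / 2) (-x) x := by
    have := ((hasDerivAt_pow 2 x).neg).div_const 2
    refine this.congr_deriv ?_
    norm_num; ring
  have h2 : HasDerivAt (fun x : ℝ => rexp (-x ^ 2 / 2)) (rexp (-x ^ 2 / 2) * (-x)) x := h1.exp
  have h3 := ((hasDerivAt_id x).neg).mul h2
  refine h3.congr_deriv ?_
  simp only [Pi.neg_apply, id_eq]; ring

lemma tendsto_G_top : Tendsto (fun x : ℝ => x * rexp (-x ^ 2 / 2)) atTop (nhds 0) := by
  have h := rpow_mul_exp_neg_mul_sq_isLittleO_exp_neg (b := 1/2) (by norm_num) 1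
  have harg : Tendsto (fun x : ℝ => -(1/2) * x) atTop atBot := by
    exact Filter.Tendsto.const_mul_atTop_of_neg (by norm_num) tendsto_id
  have h2 : Tendsto (fun x : ℝ => rexp (-(1/2) * x)) atTop (nhds 0) :=
    Real.tendsto_exp_atBot.comp harg
  have h3 := h.isBigO.trans_tendsto h2
  refine h3.congr' ?_
  filter_upwards [eventually_ge_atTop (0:ℝ)] with x hx
  rw [Real.rpow_one]
  ring_nf

lemma tendsto_F_top : Tendsto (fun x : ℝ => -x * rexp (-x ^ 2 / 2)) atTop (nhds 0) := by
  have := tendsto_G_top.neg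
  simp only [neg_zero] at this
  exact this.congr (fun x => by ring)

lemma tendsto_F_bot : Tendsto (fun x : ℝ => -x * rexp (-x ^ 2 / 2)) atBot (nhds 0) := by
  have h := tendsto_G_top.comp tendsto_neg_atBot_atTop
  have : (fun x : ℝ => (fun y : ℝ => y * rexp (-y ^ 2 / 2)) (-x)) =
      fun x : ℝ => -x * rexp (-x ^ 2 / 2) := by
    funext x; simp only []; ring_nf
  rwa [show ((fun y : ℝ => y * rexp (-y ^ 2 / 2)) ∘ (fun x : ℝ => -x)) =
      fun x : ℝ => -x * rexp (-x ^ 2 / 2) from this] at h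

lemma int_x2m1_exp : Integrable (fun x : ℝ => (x ^ 2 - 1) * rexp (-x ^ 2 / 2)) := by
  refine (int_x2_exp.sub int_exp).congr (Filter.Eventually.of_forall fun x => ?_)
  simp only [Pi.sub_apply]; ring

lemma int_parts : ∫ x : ℝ, (x ^ 2 - 1) * rexp (-x ^ 2 / 2) = 0 := by
  have hIoi : ∫ x in Set.Ioi (0:ℝ), (x ^ 2 - 1) * rexp (-x ^ 2 / 2) =
      0 - (-(0:ℝ) * rexp (-(0:ℝ) ^ 2 / 2)) :=
    MeasureTheory.integral_Ioi_of_hasDerivAt_of_tendsto'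
      (fun x _ => hasDeriv_F x) int_x2m1_exp.integrableOn tendsto_F_top
  have hIic : ∫ x in Set.Iic (0:ℝ), (x ^ 2 - 1) * rexp (-x ^ 2 / 2) =
      (-(0:ℝ) * rexp (-(0:ℝ) ^ 2 / 2)) - 0 :=
    MeasureTheory.integral_Iic_of_hasDerivAt_of_tendsto'
      (fun x _ => hasDeriv_F x) int_x2m1_exp.integrableOn tendsto_F_bot
  have := MeasureTheory.integral_add_compl (measurableSet_Iic (a := (0:ℝ)))
    int_x2m1_exp
  rw [Set.compl_Iic] at this
  rw [← this, hIic, hIoi]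
  norm_num

lemma int_x2_exp_val : ∫ x : ℝ, x ^ 2 * rexp (-x ^ 2 / 2) = Real.sqrt (2 * π) := by
  have h1 : ∫ x : ℝ, rexp (-x ^ 2 / 2) = Real.sqrt (2 * π) := by
    have := integral_gaussian (1/2)
    rw [show (π / (1/2)) = 2 * π by ring] at this
    rw [← this]
    congr 1; funext x; congr 1; ring
  have h2 := MeasureTheory.integral_add int_x2m1_exp int_exp
  simp only [int_parts, zero_add] at h2
  rw [← h1, ← h2]
  congr 1; funext x; ring

lemma sqrt2pi_pos : 0 < Real.sqrt (2 * π) := Real.sqrt_pos.mpr (by positivity)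

lemma m2 : ∫ x, x ^ 2 ∂(gaussianReal 0 1) = 1 := by
  rw [integral_gauss]
  have : (fun x : ℝ => q x * x ^ 2) =
      fun x : ℝ => (Real.sqrt (2 * π))⁻¹ * (x ^ 2 * rexp (-x ^ 2 / 2)) := by
    funext x; simp only [q_eq]; ring
  rw [this, integral_const_mul, int_x2_exp_val,
    inv_mul_cancel₀ sqrt2pi_pos.ne']

/-- Antisymmetric-under-reflection integrals vanish. -/
lemma antisym_int (F : ℝ → ℝ) (c : ℝ) (hF : ∀ x, F (-x - c) = -F x) :
    ∫ x : ℝ, F x = 0 := by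
  have h1 : ∫ x : ℝ, F (-(x + c)) = ∫ x : ℝ, F (-x) := by
    exact integral_add_right_eq_self (fun x : ℝ => F (-x)) c
  have h2 : ∫ x : ℝ, F (-x) = ∫ x : ℝ, F x :=
    integral_neg_eq_self F volume
  have h3 : (fun x : ℝ => F (-(x + c))) = fun x : ℝ => -F x := by
    funext x
    rw [show -(x + c) = -x - c by ring, hF]
  rw [h3, integral_neg, h2] at h1
  linarith

lemma htanh (a : ℝ) : rexp (-(2 * a)) * (1 + Real.tanh a) = 1 - Real.tanh a := by
  rw [Real.tanh_eq_sinh_div_cosh, Real.sinh_eq, Real.cosh_eq]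
  have hc : 0 < rexp a + rexp (-a) := by positivity
  have h1 : rexp a * rexp (-a) = 1 := by
    rw [← Real.exp_add]; simp
  have h2 : rexp (-(2 * a)) = rexp (-a) * rexp (-a) := by
    rw [← Real.exp_add]; ring_nf
  field_simp
  linear_combination 2 * rexp a * h2 + 2 * rexp (-a) * h1

lemma tanh_abs_le_one (a : ℝ) : |Real.tanh a| ≤ 1 := by
  rw [Real.tanh_eq_sinh_div_cosh, abs_div]
  have hc : (0:ℝ) < Real.cosh a := Real.cosh_pos a
  rw [abs_of_pos hc, div_le_one hc]
  have h := Real.cosh_sq_sub_sinh_sq a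
  nlinarith [sq_abs (Real.sinh a), abs_nonneg (Real.sinh a)]

lemma gauss_symm (f : ℝ → ℝ) :
    ∫ x, f (-x) ∂(gaussianReal 0 1) = ∫ x, f x ∂(gaussianReal 0 1) := by
  rw [integral_gauss, integral_gauss]
  have h : (fun x : ℝ => q x * f (-x)) = fun x : ℝ => (fun y : ℝ => q y * f y) (-x) := by
    funext x
    simp only [q_eq]
    ring_nf
  rw [h, integral_neg_eq_self (fun y : ℝ => q y * f y) volume]

lemma gauss_int_bdd (f : ℝ → ℝ) (hf : Measurable f) (C : ℝ) (hC : ∀ x, ‖f x‖ ≤ C) :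
    Integrable f (gaussianReal 0 1) :=
  ⟨hf.aestronglyMeasurable, HasFiniteIntegral.of_bounded (MeasureTheory.ae_of_all _ hC)⟩

lemma cont_tanh : Continuous Real.tanh := by
  have h : Real.tanh = fun x => Real.sinh x / Real.cosh x := funext Real.tanh_eq_sinh_div_cosh
  rw [h]
  exact Real.continuous_sinh.div Real.continuous_cosh (fun x => (Real.cosh_pos x).ne')

lemma qshift (τ x : ℝ) (hτ : 0 ≤ τ) :
    q (-x - 2 * Real.sqrt τ) = q x * rexp (-(2 * (τ + Real.sqrt τ * x))) := by
  rw [q_eq, q_eq, mul_assoc, ← Real.exp_add]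
  congr 1
  rw [Real.exp_eq_exp]
  linear_combination (-2 : ℝ) * Real.sq_sqrt hτ

lemma arg_shift (τ x : ℝ) (hτ : 0 ≤ τ) :
    τ + Real.sqrt τ * (-x - 2 * Real.sqrt τ) = -(τ + Real.sqrt τ * x) := by
  linear_combination (-2 : ℝ) * Real.sq_sqrt hτ

-- integrability of tanh-type integrands over the gaussian
lemma it1 (τ : ℝ) : Integrable (fun z => Real.tanh (τ + Real.sqrt τ * z)) (gaussianReal 0 1) := by
  refine gauss_int_bdd _ (cont_tanh.comp (by continuity)).measurable 1 fun x => ?_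
  exact (Real.norm_eq_abs _) ▸ tanh_abs_le_one _

lemma it2 (τ : ℝ) :
    Integrable (fun z => Real.tanh (τ + Real.sqrt τ * z) ^ 2) (gaussianReal 0 1) := by
  refine gauss_int_bdd _ ((cont_tanh.comp (by continuity)).pow 2).measurable 1 fun x => ?_
  rw [Real.norm_eq_abs, abs_pow]
  calc |Real.tanh (τ + Real.sqrt τ * x)| ^ 2 ≤ 1 ^ 2 := by
        exact pow_le_pow_left₀ (abs_nonneg _) (tanh_abs_le_one _) 2
    _ = 1 := one_pow 2

lemma keyA (τ : ℝ) (hτ : 0 < τ) :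
    ∫ z, Real.tanh (τ + Real.sqrt τ * z) ^ 2 ∂(gaussianReal 0 1) =
      ∫ z, Real.tanh (τ + Real.sqrt τ * z) ∂(gaussianReal 0 1) := by
  have hsub := MeasureTheory.integral_sub (it2 τ) (it1 τ)
  have hzero : ∫ z, (Real.tanh (τ + Real.sqrt τ * z) ^ 2 -
      Real.tanh (τ + Real.sqrt τ * z)) ∂(gaussianReal 0 1) = 0 := by
    rw [integral_gauss]
    refine antisym_int _ (2 * Real.sqrt τ) fun x => ?_
    have ht := htanh (τ + Real.sqrt τ * x)
    rw [qshift τ x hτ.le, arg_shift τ x hτ.le, Real.tanh_neg]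
    linear_combination (q x * Real.tanh (τ + Real.sqrt τ * x)) * ht
  rw [hsub] at hzero
  linarith

lemma iL (τ : ℝ) : Integrable (fun z : ℝ => τ + Real.sqrt τ * z) (gaussianReal 0 1) :=
  (integrable_const τ).add (mi1.const_mul (Real.sqrt τ))

lemma iLt (τ : ℝ) :
    Integrable (fun z : ℝ => (τ + Real.sqrt τ * z) * Real.tanh (τ + Real.sqrt τ * z))
      (gaussianReal 0 1) := by
  refine Integrable.mono' (iL τ).abs
    ((((by continuity : Continuous fun z : ℝ => τ + Real.sqrt τ * z)).mul
      (cont_tanh.comp (by continuity))).measurable.aestronglyMeasurable)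
    (MeasureTheory.ae_of_all _ fun x => ?_)
  rw [Real.norm_eq_abs, abs_mul]
  exact mul_le_of_le_one_right (abs_nonneg _) (tanh_abs_le_one _)

lemma keyD (τ : ℝ) (hτ : 0 < τ) :
    ∫ z, (τ + Real.sqrt τ * z) * Real.tanh (τ + Real.sqrt τ * z) ∂(gaussianReal 0 1) = τ := by
  have hLval : ∫ z : ℝ, (τ + Real.sqrt τ * z) ∂(gaussianReal 0 1) = τ := by
    rw [MeasureTheory.integral_add (integrable_const τ) (mi1.const_mul (Real.sqrt τ)),
      integral_const_mul, m1, integral_const]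
    simp
  have hsub := MeasureTheory.integral_sub (iLt τ) (iL τ)
  have hzero : ∫ z, ((τ + Real.sqrt τ * z) * Real.tanh (τ + Real.sqrt τ * z) -
      (τ + Real.sqrt τ * z)) ∂(gaussianReal 0 1) = 0 := by
    rw [integral_gauss]
    refine antisym_int _ (2 * Real.sqrt τ) fun x => ?_
    have ht := htanh (τ + Real.sqrt τ * x)
    rw [qshift τ x hτ.le, arg_shift τ x hτ.le, Real.tanh_neg]
    linear_combination (q x * (τ + Real.sqrt τ * x)) * ht
  rw [hsub, hLval] at hzero
  linarith

lemma L2_expand (τ : ℝ) (hτ : 0 ≤ τ) : (fun z : ℝ => (τ + Real.sqrt τ * z) ^ 2) =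
    fun z : ℝ => τ ^ 2 + 2 * τ * Real.sqrt τ * z + τ * z ^ 2 := by
  funext z
  linear_combination (z ^ 2 : ℝ) * Real.sq_sqrt hτ

lemma iL2 (τ : ℝ) (hτ : 0 ≤ τ) :
    Integrable (fun z : ℝ => (τ + Real.sqrt τ * z) ^ 2) (gaussianReal 0 1) := by
  rw [L2_expand τ hτ]
  exact ((integrable_const (τ^2)).add (mi1.const_mul _)).add (mi2.const_mul τ)

lemma hL2val (τ : ℝ) (hτ : 0 ≤ τ) :
    ∫ z : ℝ, (τ + Real.sqrt τ * z) ^ 2 ∂(gaussianReal 0 1) = τ ^ 2 + τ := by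
  have i1 : Integrable (fun z : ℝ => τ ^ 2 + 2 * τ * Real.sqrt τ * z) (gaussianReal 0 1) := by
    exact (integrable_const (τ^2)).add (mi1.const_mul (2 * τ * Real.sqrt τ))
  have i0 : Integrable (fun z : ℝ => τ ^ 2) (gaussianReal 0 1) := integrable_const _
  have i2 : Integrable (fun z : ℝ => 2 * τ * Real.sqrt τ * z) (gaussianReal 0 1) := by
    exact mi1.const_mul (2 * τ * Real.sqrt τ)
  have i3 : Integrable (fun z : ℝ => τ * z ^ 2) (gaussianReal 0 1) := mi2.const_mul τ
  rw [L2_expand τ hτ, MeasureTheory.integral_add i1 i3, MeasureTheory.integral_add i0 i2,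
    integral_const_mul, integral_const_mul, m1, m2, integral_const]
  simp

lemma keyB (τ : ℝ) (hτ : 0 < τ) :
    τ / (τ + 1) ≤ ∫ z, Real.tanh (τ + Real.sqrt τ * z) ^ 2 ∂(gaussianReal 0 1) := by
  set c : ℝ := (τ + 1)⁻¹ with hc
  have hexp : (fun z : ℝ => ((τ + Real.sqrt τ * z) * c - Real.tanh (τ + Real.sqrt τ * z)) ^ 2)
      = fun z : ℝ => (c ^ 2 * (τ + Real.sqrt τ * z) ^ 2 -
          2 * c * ((τ + Real.sqrt τ * z) * Real.tanh (τ + Real.sqrt τ * z))) +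
          Real.tanh (τ + Real.sqrt τ * z) ^ 2 := by
    funext z; ring
  have hnn : 0 ≤ ∫ z, ((τ + Real.sqrt τ * z) * c - Real.tanh (τ + Real.sqrt τ * z)) ^ 2
      ∂(gaussianReal 0 1) :=
    MeasureTheory.integral_nonneg fun z => sq_nonneg _
  have j1 : Integrable (fun z : ℝ => c ^ 2 * (τ + Real.sqrt τ * z) ^ 2) (gaussianReal 0 1) :=
    (iL2 τ hτ.le).const_mul (c^2)
  have j2 : Integrable (fun z : ℝ =>
      2 * c * ((τ + Real.sqrt τ * z) * Real.tanh (τ + Real.sqrt τ * z))) (gaussianReal 0 1) :=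
    (iLt τ).const_mul (2*c)
  have j12 : Integrable (fun z : ℝ => c ^ 2 * (τ + Real.sqrt τ * z) ^ 2 -
      2 * c * ((τ + Real.sqrt τ * z) * Real.tanh (τ + Real.sqrt τ * z))) (gaussianReal 0 1) := by
    exact j1.sub j2
  rw [hexp, MeasureTheory.integral_add j12 (it2 τ),
    MeasureTheory.integral_sub j1 j2,
    integral_const_mul, integral_const_mul, hL2val τ hτ.le, keyD τ hτ] at hnn
  have hpos : (0:ℝ) < τ + 1 := by linarith
  have hval : c ^ 2 * (τ ^ 2 + τ) - 2 * c * τ = -(τ / (τ + 1)) := by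
    rw [hc]; field_simp; ring
  linarith

lemma twoPointProb : IsProbabilityMeasure
    ((2⁻¹ : ENNReal) • Measure.dirac (1:ℝ) + (2⁻¹ : ENNReal) • Measure.dirac (-1:ℝ)) := by
  constructor
  simp [ENNReal.inv_two_add_inv_two]

lemma integrable_dirac' (g : ℝ → ℝ) (hg : StronglyMeasurable g) (a : ℝ) :
    Integrable g (Measure.dirac a) := by
  refine ⟨hg.aestronglyMeasurable, ?_⟩
  show (∫⁻ x, ‖g x‖₊ ∂Measure.dirac a) < ⊤
  rw [lintegral_dirac]
  exact ENNReal.coe_lt_top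

lemma integral_twoPoint (g : ℝ → ℝ) (hg : StronglyMeasurable g) :
    ∫ x, g x ∂((2⁻¹ : ENNReal) • Measure.dirac (1:ℝ) + (2⁻¹ : ENNReal) • Measure.dirac (-1:ℝ))
      = 2⁻¹ * g 1 + 2⁻¹ * g (-1) := by
  rw [MeasureTheory.integral_add_measure
      ((integrable_dirac' g hg 1).smul_measure (by norm_num))
      ((integrable_dirac' g hg (-1)).smul_measure (by norm_num)),
    integral_smul_measure, integral_smul_measure, integral_dirac, integral_dirac]
  norm_num

lemma reduce {Ω : Type*} [MeasureSpace Ω] [IsProbabilityMeasure (ℙ : Measure Ω)]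
    (X Z : Ω → ℝ) (hXm : Measurable X) (hZm : Measurable Z)
    (hX : Measure.map X ℙ =
      (2⁻¹ : ENNReal) • Measure.dirac (1 : ℝ) + (2⁻¹ : ENNReal) • Measure.dirac (-1 : ℝ))
    (hZ : Measure.map Z ℙ = gaussianReal 0 1)
    (hindep : IndepFun X Z ℙ)
    (f : ℝ → ℝ → ℝ) (hf : Measurable fun p : ℝ × ℝ => f p.1 p.2)
    (C : ℝ) (hC : ∀ x z, ‖f x z‖ ≤ C) :
    ∫ ω, f (X ω) (Z ω) =
      2⁻¹ * (∫ z, f 1 z ∂(gaussianReal 0 1)) + 2⁻¹ * (∫ z, f (-1) z ∂(gaussianReal 0 1)) := by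
  have hmap : Measure.map (fun ω => (X ω, Z ω)) ℙ =
      (Measure.map X ℙ).prod (Measure.map Z ℙ) :=
    (indepFun_iff_map_prod_eq_prod_map_map hXm.aemeasurable hZm.aemeasurable).mp hindep
  have hXZ : Measurable fun ω => (X ω, Z ω) := hXm.prodMk hZm
  have h1 : ∫ ω, f (X ω) (Z ω) = ∫ p : ℝ × ℝ, f p.1 p.2
      ∂(Measure.map (fun ω => (X ω, Z ω)) ℙ) :=
    (integral_map hXZ.aemeasurable hf.aestronglyMeasurable).symm
  rw [h1, hmap, hX, hZ]
  haveI := twoPointProb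
  have hint : Integrable (fun p : ℝ × ℝ => f p.1 p.2)
      (((2⁻¹ : ENNReal) • Measure.dirac (1:ℝ) + (2⁻¹ : ENNReal) • Measure.dirac (-1:ℝ)).prod
        (gaussianReal 0 1)) :=
    ⟨hf.aestronglyMeasurable,
      HasFiniteIntegral.of_bounded (C := C) (MeasureTheory.ae_of_all _ fun p => hC p.1 p.2)⟩
  rw [MeasureTheory.integral_prod _ hint]
  exact integral_twoPoint _ hf.stronglyMeasurable.integral_prod_right'

/-- For `X` uniform on `{±1}` and `Z ~ N(0,1)` independent, the normalized correlation of
the MMSE estimator `tanh(τX + √τ Z)` with `X` dominates that of the linear estimator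
`τX + √τ Z`, which equals `τ/(τ+1)`. -/
theorem stmt_7 {Ω : Type*} [MeasureSpace Ω]
    [IsProbabilityMeasure (ℙ : Measure Ω)]
    (X Z : Ω → ℝ) (hXm : Measurable X) (hZm : Measurable Z)
    (hX : Measure.map X ℙ =
      (2⁻¹ : ENNReal) • Measure.dirac (1 : ℝ) + (2⁻¹ : ENNReal) • Measure.dirac (-1 : ℝ))
    (hZ : Measure.map Z ℙ = gaussianReal 0 1)
    (hindep : IndepFun X Z ℙ) (τ : ℝ) (hτ : 0 < τ) :
    (∫ ω, (τ * X ω + Real.sqrt τ * Z ω) * X ω) ^ 2 /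
        (∫ ω, (τ * X ω + Real.sqrt τ * Z ω) ^ 2) = τ / (τ + 1) ∧
    (∫ ω, Real.tanh (τ * X ω + Real.sqrt τ * Z ω) * X ω) ^ 2 /
        (∫ ω, Real.tanh (τ * X ω + Real.sqrt τ * Z ω) ^ 2) ≥ τ / (τ + 1) := by
  -- X is a.e. ±1
  have hXae : ∀ᵐ ω ∂ℙ, X ω = 1 ∨ X ω = -1 := by
    have hs : MeasurableSet ({1, -1} : Set ℝ) :=
      ((Set.finite_singleton (-1)).insert 1).measurableSet
    have h0 : ℙ (X ⁻¹' ({1, -1} : Set ℝ)ᶜ) = 0 := by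
      rw [← Measure.map_apply hXm hs.compl, hX]
      rw [Measure.add_apply, Measure.smul_apply, Measure.smul_apply,
        Measure.dirac_apply' _ hs.compl, Measure.dirac_apply' _ hs.compl]
      have h1 : (1:ℝ) ∉ ({1, -1} : Set ℝ)ᶜ := by simp
      have h2 : (-1:ℝ) ∉ ({1, -1} : Set ℝ)ᶜ := by simp
      rw [Set.indicator_of_notMem h1, Set.indicator_of_notMem h2]
      simp
    rw [ae_iff]
    have hset : {ω | ¬(X ω = 1 ∨ X ω = -1)} = X ⁻¹' ({1, -1} : Set ℝ)ᶜ := by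
      ext ω; simp
    rw [hset]; exact h0
  -- moments of Z
  have hiZ : Integrable Z ℙ := by
    have h1 : Integrable (fun x : ℝ => x) (Measure.map Z ℙ) := hZ ▸ mi1
    exact (integrable_map_measure aestronglyMeasurable_id hZm.aemeasurable).mp h1
  have hEZ : ∫ ω, Z ω = 0 := by
    have h := integral_map (μ := ℙ) (φ := Z) hZm.aemeasurable
      (f := fun x : ℝ => x) aestronglyMeasurable_id
    rw [hZ, m1] at h
    exact h.symm
  have hiZ2 : Integrable (fun ω => Z ω ^ 2) ℙ := by
    have h1 : Integrable (fun x : ℝ => x ^ 2) (Measure.map Z ℙ) := hZ ▸ mi2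
    exact (integrable_map_measure ((measurable_id.pow_const 2).aestronglyMeasurable)
      hZm.aemeasurable).mp h1
  have hEZ2 : ∫ ω, Z ω ^ 2 = 1 := by
    have h := integral_map (μ := ℙ) (φ := Z) hZm.aemeasurable
      (f := fun x : ℝ => x ^ 2) ((measurable_id.pow_const 2).aestronglyMeasurable)
    rw [hZ, m2] at h
    exact h.symm
  -- moments of X
  have hX2ae : (fun ω => X ω ^ 2) =ᵐ[ℙ] fun _ => (1:ℝ) :=
    hXae.mono fun ω h => by rcases h with h | h <;> simp [h]
  have hiX : Integrable X ℙ := by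
    refine Integrable.mono' (integrable_const 1) hXm.aestronglyMeasurable
      (hXae.mono fun ω h => ?_)
    rcases h with h | h <;> simp [h]
  have hiX2 : Integrable (fun ω => X ω ^ 2) ℙ := (integrable_const 1).congr hX2ae.symm
  have hEX2 : ∫ ω, X ω ^ 2 = 1 := by
    rw [integral_congr_ae hX2ae]; simp
  have hEX : ∫ ω, X ω = 0 := by
    have h := integral_map (μ := ℙ) (φ := X) hXm.aemeasurable
      (f := fun x : ℝ => x) aestronglyMeasurable_id
    rw [hX, integral_twoPoint (fun x : ℝ => x) stronglyMeasurable_id] at h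
    norm_num at h
    exact h.symm
  have hiXZ : Integrable (fun ω => X ω * Z ω) ℙ := hindep.integrable_mul hiX hiZ
  have hEXZ : ∫ ω, X ω * Z ω = 0 := by
    have h : ∫ ω, X ω * Z ω = (∫ ω, X ω) * ∫ ω, Z ω :=
      hindep.integral_fun_mul_eq_mul_integral hiX.aestronglyMeasurable hiZ.aestronglyMeasurable
    rw [h, hEX, zero_mul]
  -- Part 1
  have num1 : ∫ ω, (τ * X ω + Real.sqrt τ * Z ω) * X ω = τ := by
    have hpt : (fun ω => (τ * X ω + Real.sqrt τ * Z ω) * X ω) =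
        fun ω => τ * X ω ^ 2 + Real.sqrt τ * (X ω * Z ω) := funext fun ω => by ring
    rw [hpt, MeasureTheory.integral_add (hiX2.const_mul τ) (hiXZ.const_mul _),
      integral_const_mul, integral_const_mul, hEX2, hEXZ]
    ring
  have den1 : ∫ ω, (τ * X ω + Real.sqrt τ * Z ω) ^ 2 = τ ^ 2 + τ := by
    have hpt : (fun ω => (τ * X ω + Real.sqrt τ * Z ω) ^ 2) =
        fun ω => (τ ^ 2 * X ω ^ 2 + (2 * τ * Real.sqrt τ) * (X ω * Z ω)) + τ * Z ω ^ 2 :=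
      funext fun ω => by linear_combination (Z ω ^ 2 : ℝ) * Real.sq_sqrt hτ.le
    have k1 : Integrable (fun ω => τ ^ 2 * X ω ^ 2 +
        2 * τ * Real.sqrt τ * (X ω * Z ω)) ℙ := by
      exact (hiX2.const_mul _).add (hiXZ.const_mul _)
    rw [hpt, MeasureTheory.integral_add k1 (hiZ2.const_mul τ),
      MeasureTheory.integral_add (hiX2.const_mul (τ^2)) (hiXZ.const_mul (2*τ*Real.sqrt τ)),
      integral_const_mul, integral_const_mul, integral_const_mul, hEX2, hEXZ, hEZ2]
    ring
  constructor
  · rw [num1, den1, div_eq_div_iff (by positivity) (by positivity)]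
    ring
  -- Part 2
  · set A : ℝ := ∫ z, Real.tanh (τ + Real.sqrt τ * z) ∂(gaussianReal 0 1) with hA
    set B : ℝ := ∫ z, Real.tanh (τ + Real.sqrt τ * z) ^ 2 ∂(gaussianReal 0 1) with hB
    have hmeas2 : Measurable fun p : ℝ × ℝ => Real.tanh (τ * p.1 + Real.sqrt τ * p.2) :=
      (cont_tanh.comp (by continuity)).measurable
    have hclamp : ∀ x : ℝ, |max (-1) (min 1 x)| ≤ 1 := fun x =>
      abs_le.mpr ⟨le_max_left _ _, max_le (by norm_num) (min_le_left _ _)⟩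
    have hC1 : ∫ ω, Real.tanh (τ * X ω + Real.sqrt τ * Z ω) * X ω = A := by
      have hae : (fun ω => Real.tanh (τ * X ω + Real.sqrt τ * Z ω) * X ω) =ᵐ[ℙ]
          fun ω => Real.tanh (τ * X ω + Real.sqrt τ * Z ω) * max (-1) (min 1 (X ω)) :=
        hXae.mono fun ω h => by
          rcases h with h | h <;> simp only [h] <;> norm_num [max_def, min_def]
      rw [integral_congr_ae hae]
      have hred := reduce X Z hXm hZm hX hZ hindep
        (fun x z => Real.tanh (τ * x + Real.sqrt τ * z) * max (-1) (min 1 x))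
        (hmeas2.mul (by measurability)) 1
        (fun x z => by
          rw [Real.norm_eq_abs, abs_mul]
          exact mul_le_one₀ (tanh_abs_le_one _) (abs_nonneg _) (hclamp x))
      rw [hred]
      have e1 : ∫ z, Real.tanh (τ * 1 + Real.sqrt τ * z) * max (-1) (min 1 (1:ℝ))
          ∂(gaussianReal 0 1) = A := by
        rw [hA]; congr 1; funext z; norm_num
      have e2 : ∫ z, Real.tanh (τ * (-1) + Real.sqrt τ * z) * max (-1) (min 1 (-1:ℝ))
          ∂(gaussianReal 0 1) = A := by
        have h4 : (fun z : ℝ => Real.tanh (τ * (-1) + Real.sqrt τ * z) * max (-1) (min 1 (-1:ℝ)))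
            = fun z : ℝ => -Real.tanh (-τ + Real.sqrt τ * z) := by
          funext z
          have : max (-1) (min 1 (-1:ℝ)) = -1 := by norm_num
          rw [this, show τ * (-1) + Real.sqrt τ * z = -τ + Real.sqrt τ * z by ring]
          ring
        rw [h4, integral_neg]
        have h5 := gauss_symm (fun z => Real.tanh (-τ + Real.sqrt τ * z))
        have h6 : (fun z : ℝ => Real.tanh (-τ + Real.sqrt τ * (-z)))
            = fun z : ℝ => -Real.tanh (τ + Real.sqrt τ * z) := by
          funext z
          rw [show -τ + Real.sqrt τ * (-z) = -(τ + Real.sqrt τ * z) by ring, Real.tanh_neg]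
        rw [h6, integral_neg] at h5
        rw [← h5, hA]
        ring
      rw [e1, e2]
      ring
    have hC2 : ∫ ω, Real.tanh (τ * X ω + Real.sqrt τ * Z ω) ^ 2 = B := by
      have hred := reduce X Z hXm hZm hX hZ hindep
        (fun x z => Real.tanh (τ * x + Real.sqrt τ * z) ^ 2)
        (hmeas2.pow_const 2) 1
        (fun x z => by
          rw [Real.norm_eq_abs, abs_pow]
          calc |Real.tanh (τ * x + Real.sqrt τ * z)| ^ 2 ≤ 1 ^ 2 :=
                pow_le_pow_left₀ (abs_nonneg _) (tanh_abs_le_one _) 2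
            _ = 1 := one_pow 2)
      rw [hred]
      have e1 : ∫ z, Real.tanh (τ * 1 + Real.sqrt τ * z) ^ 2 ∂(gaussianReal 0 1) = B := by
        rw [hB]; congr 1; funext z; norm_num
      have e2 : ∫ z, Real.tanh (τ * (-1) + Real.sqrt τ * z) ^ 2 ∂(gaussianReal 0 1) = B := by
        have h5 := gauss_symm (fun z => Real.tanh (τ * (-1) + Real.sqrt τ * z) ^ 2)
        have h6 : (fun z : ℝ => Real.tanh (τ * (-1) + Real.sqrt τ * (-z)) ^ 2)
            = fun z : ℝ => Real.tanh (τ + Real.sqrt τ * z) ^ 2 := by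
          funext z
          rw [show τ * (-1) + Real.sqrt τ * (-z) = -(τ + Real.sqrt τ * z) by ring,
            Real.tanh_neg]
          ring
        rw [h6] at h5
        rw [← h5, hB]
      rw [e1, e2]
      ring
    rw [hC1, hC2]
    have hBA : B = A := keyA τ hτ
    have hBge : τ / (τ + 1) ≤ B := keyB τ hτ
    have hBpos : 0 < B := lt_of_lt_of_le (by positivity) hBge
    have : A ^ 2 / B = B := by
      rw [← hBA, sq, mul_div_assoc, div_self hBpos.ne', mul_one]
    rw [ge_iff_le, this]
    exact hBge
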